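/- There is an absolute constant α > 0 such that for all k ≥ 3 and all m, n with m/n ≤ 2^k k^{−1} ln k the following is true. Let 1 ≤ l ≤ √k be an integer and set δ = α·k^{−4l}. For a set Z ⊆ V let X_Z be the number of indices i ∈ [m] such that Φ_i is a clause with exactly l positive literals which contains a variable from Z. Then whp max{ X_Z : Z ⊆ V, |Z| ≤ δn } ≤ √δ·n. -/

import Mathlib

open Finset MeasureTheory Filter
open scoped ENNReal

attribute [local instance] Classical.propDecidable

namespace RandomKSAT

/-- A literal over `n` variables: a pair (variable, sign), `true` = positive occurrence. -/
abbrev Lit (n : ℕ) := Fin n × Bool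

/-- A `k`-SAT formula with `n` variables and `m` (ordered) clauses, each an ordered
`k`-tuple of literals. -/
abbrev Formula (n m k : ℕ) := Fin m → Fin k → Lit n

instance formulaMS (n m k : ℕ) : MeasurableSpace (Formula n m k) := ⊤

/-- The probability of an event under the uniform distribution on `Ω_k(n,m)`. -/
noncomputable def Pr (n m k : ℕ) (A : Set (Formula n m k)) : ℝ :=
  ((Finset.univ.filter (fun Φ : Formula n m k => Φ ∈ A)).card : ℝ) /
    ((Finset.univ : Finset (Formula n m k)).card : ℝ)

/-- Expectation of a random variable with respect to the uniform distribution. -/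
noncomputable def EV (n m k : ℕ) (f : Formula n m k → ℝ) : ℝ :=
  (∑ Φ : Formula n m k, f Φ) / (Fintype.card (Formula n m k) : ℝ)

/-- The uniform probability measure on `Ω_k(n,m)`. -/
noncomputable def unif (n m k : ℕ) : Measure (Formula n m k) :=
  ((Fintype.card (Formula n m k) : ℝ≥0∞))⁻¹ • Measure.count

variable {n m k : ℕ}

/-- A literal is true under an assignment. -/
def litTrue (σ : Fin n → Bool) (l : Lit n) : Prop := σ l.1 = l.2

/-- An assignment satisfies a formula if every clause contains a true literal. -/
def sat (σ : Fin n → Bool) (Φ : Formula n m k) : Prop := ∀ i, ∃ j, litTrue σ (Φ i j)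

/-- The assignment `σ_Z`: variables in `Z` are false, all others true. -/
noncomputable def sigmaZ (Z : Finset (Fin n)) : Fin n → Bool :=
  fun x => if x ∈ Z then false else true

/-- Number of positive literals of clause `i`. -/
noncomputable def posCount (Φ : Formula n m k) (i : Fin m) : ℕ :=
  (Finset.univ.filter (fun j => (Φ i j).2 = true)).card

/-- Clause `i` is all-negative. -/
def allNeg (Φ : Formula n m k) (i : Fin m) : Prop := ∀ j, (Φ i j).2 = false

/-- The set of indices of `Z`-unique clauses: exactly one positive literal with variable
outside `Z`, and no negative literal with variable in `Z`. -/
noncomputable def Uset (Φ : Formula n m k) (Z : Finset (Fin n)) : Finset (Fin m) :=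
  Finset.univ.filter (fun i =>
    (Finset.univ.filter (fun j => (Φ i j).2 = true ∧ (Φ i j).1 ∉ Z)).card = 1 ∧
    ∀ j, (Φ i j).2 = false → (Φ i j).1 ∉ Z)

/-- `U_t(x)`: the number of `Z`-unique clauses in which `x` occurs positively. -/
noncomputable def Ux (Φ : Formula n m k) (Z : Finset (Fin n)) (x : Fin n) : ℕ :=
  ((Uset Φ Z).filter (fun i => ∃ j, Φ i j = (x, true))).card

/-- `k₁ = ⌈k/2⌉`. -/
def k1 (k : ℕ) : ℕ := (k + 1) / 2

/-- The map `π₀`: `Sum.inl b` records only the sign `b` of a literal, `Sum.inr l`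
records the literal `l` itself (revealed). -/
noncomputable def pi0 (Φ : Formula n m k) (i : Fin m) (j : Fin k) : Bool ⊕ Lit n :=
  if i ∈ Uset Φ ∅ ∧ (Φ i j).2 = true then Sum.inr (Φ i j) else Sum.inl (Φ i j).2

/-- State of the Phase-1 process: the set `Z_t`, the map `π_t`, the clause `φ_t`
and variable `z_t` chosen at the last step (if any), and whether the process stopped. -/
structure P1State (n m k : ℕ) where
  Z : Finset (Fin n)
  pi : Fin m → Fin k → Bool ⊕ Lit n
  lastPhi : Option (Fin m)
  lastZ : Option (Fin n)
  stopped : Bool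

/-- One step (PI1--PI4) of the Phase-1 process. -/
noncomputable def p1step (Φ : Formula n m k) (s : P1State n m k) : P1State n m k :=
  if s.stopped then s else
  let E := Finset.univ.filter (fun i : Fin m => allNeg Φ i ∧ ∀ j, (Φ i j).1 ∉ s.Z)
  if hE : E.Nonempty then
    if hk : 0 < k then
      let φt := E.min' hE
      let J := Finset.univ.filter
        (fun j : Fin k => j.val + 1 < k1 k ∧ Ux Φ s.Z ((Φ φt j).1) = 0)
      let jsel : Fin k :=
        if hJ : J.Nonempty then J.min' hJ
        else ⟨min (k1 k - 1) (k - 1), by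
          have h1 := Nat.min_le_right (k1 k - 1) (k - 1); omega⟩
      let z := (Φ φt jsel).1
      let Z' := insert z s.Z
      { Z := Z'
        pi := fun i j =>
          if (i = φt ∧ j.val < k1 k) ∨ (Φ i j).1 ∈ Z' ∨
             (i ∈ Uset Φ Z' ∧ pi0 Φ i j = Sum.inl true)
          then Sum.inr (Φ i j) else s.pi i j
        lastPhi := some φt
        lastZ := some z
        stopped := false }
    else { s with stopped := true, lastPhi := none, lastZ := none }
  else { s with stopped := true, lastPhi := none, lastZ := none }

/-- The Phase-1 process: state after `t` steps. -/
noncomputable def p1 (Φ : Formula n m k) : ℕ → P1State n m k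
  | 0 => ⟨∅, pi0 Φ, none, none, false⟩
  | t + 1 => p1step Φ (p1 Φ t)

/-- The stopping time `T` of the Phase-1 process. -/
noncomputable def TT (Φ : Formula n m k) : ℕ := sInf {t | (p1 Φ (t + 1)).stopped = true}

/-- The set `Z = Z_T` produced by Phase 1. -/
noncomputable def ZT (Φ : Formula n m k) : Finset (Fin n) := (p1 Φ (TT Φ)).Z

/-- The set `𝒰_t`: clauses with a positive literal, but such that at time `t` no
position shows `π_t(i,j) = 1` nor a negative literal with variable in `Z_t`. -/
noncomputable def curlyU (Φ : Formula n m k) (t : ℕ) : Finset (Fin m) :=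
  Finset.univ.filter (fun i =>
    (∃ j, pi0 Φ i j ≠ Sum.inl false) ∧
    ¬ ∃ j, (p1 Φ t).pi i j = Sum.inl true ∨
      ∃ x ∈ (p1 Φ t).Z, (p1 Φ t).pi i j = Sum.inr (x, false))

/-- The map `ψ_t : 𝒰_t → V` (junk value outside `𝒰_t`). -/
noncomputable def psi (hn : 0 < n) (Φ : Formula n m k) (t : ℕ) (i : Fin m) : Fin n :=
  let s := sInf {s | i ∈ curlyU Φ s}
  if h : (Finset.univ.filter
      (fun j : Fin k => (Φ i j).2 = true ∧ (Φ i j).1 ∉ (p1 Φ s).Z)).Nonempty then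
    (Φ i ((Finset.univ.filter
      (fun j : Fin k => (Φ i j).2 = true ∧ (Φ i j).1 ∉ (p1 Φ s).Z)).min' h)).1
  else ((p1 Φ s).lastZ).getD ⟨0, hn⟩

/-- Clause `i` is `(Z,Z')`-endangered. -/
def endangered (Φ : Formula n m k) (Z Z' : Finset (Fin n)) (i : Fin m) : Prop :=
  ¬ ∃ j, litTrue (sigmaZ Z) (Φ i j) ∧ (Φ i j).1 ∉ Z'

/-- A variable is `(Z,Z')`-unsafe. -/
def unsafeVar (Φ : Formula n m k) (Z Z' : Finset (Fin n)) (x : Fin n) : Prop :=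
  x ∈ Z ∪ Z' ∨ ∃ i l, Φ i l = (x, true) ∧ ∀ j, j ≠ l →
    (((Φ i j).2 = true ∧ (Φ i j).1 ∈ Z ∪ Z') ∨ ((Φ i j).2 = false ∧ (Φ i j).1 ∉ Z))

/-- The Phase-2 while-loop with fuel. -/
noncomputable def p2go (Φ : Formula n m k) (Z : Finset (Fin n)) :
    ℕ → Finset (Fin n) → Finset (Fin n)
  | 0, Z' => Z'
  | f + 1, Z' =>
    let Q := Finset.univ.filter (fun i : Fin m =>
      endangered Φ Z Z' i ∧
        (Finset.univ.filter (fun j => (Φ i j).1 ∈ Z')).card < 3)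
    if hQ : Q.Nonempty then
      let i := Q.min' hQ
      let Ssafe := Finset.univ.filter (fun j : Fin k =>
        k1 k ≤ j.val ∧ j.val + 6 ≤ k ∧ ¬ unsafeVar Φ Z Z' ((Φ i j).1))
      let S := if 3 ≤ Ssafe.card then Ssafe
        else Finset.univ.filter (fun j : Fin k => k ≤ j.val + 5 ∧ (Φ i j).1 ∉ Z')
      p2go Φ Z f (Z' ∪ (((S.sort (· ≤ ·)).take 3).map (fun j => (Φ i j).1)).toFinset)
    else Z'

/-- The set `Z'` produced by Phase 2. -/
noncomputable def p2 (Φ : Formula n m k) : Finset (Fin n) := p2go Φ (ZT Φ) m ∅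

/-- `f` is a matching in the bipartite graph `G(Φ,Z,Z')` covering all
`(Z,Z')`-endangered clauses: it assigns to each endangered clause a variable of `Z'`
occurring in it, injectively on endangered clauses. -/
def coversEndangered (Φ : Formula n m k) (Z Z' : Finset (Fin n)) (f : Fin m → Fin n) : Prop :=
  (∀ i, endangered Φ Z Z' i → f i ∈ Z' ∧ ∃ j, (Φ i j).1 = f i) ∧
  ∀ i i', endangered Φ Z Z' i → endangered Φ Z Z' i' → f i = f i' → i = i'

/-- The output of the algorithm `Fix` (Phase 3): the assignment `σ_{Z,Z',M}` if a
matching `M` covering all `(Z,Z')`-endangered clauses exists, `none` ("fail") otherwise. -/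
noncomputable def fixOutput (Φ : Formula n m k) : Option (Fin n → Bool) :=
  if h : ∃ f : Fin m → Fin n, coversEndangered Φ (ZT Φ) (p2 Φ) f then
    some (fun x =>
      if x ∈ ZT Φ ∧ x ∉ p2 Φ then false
      else if ∃ i, endangered Φ (ZT Φ) (p2 Φ) i ∧ Classical.choose h i = x ∧
          ∃ j, Φ i j = (x, false) then false
      else true)
  else none

/-- The `σ`-algebra `F_t` generated by the equivalence classes of `≡_t`. -/
noncomputable def Ft (n m k : ℕ) (t : ℕ) : MeasurableSpace (Formula n m k) :=
  MeasurableSpace.comap (fun Φ : Formula n m k => fun s : Fin (t + 1) => (p1 Φ s.val).pi) ⊤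

/-- The `≡_t`-equivalence class of `Φ`. -/
noncomputable def cls (t : ℕ) (Φ : Formula n m k) : Finset (Formula n m k) :=
  Finset.univ.filter (fun Ψ => ∀ s ≤ t, (p1 Ψ s).pi = (p1 Φ s).pi)

/-- The set `E_t` of positions whose literal is not yet revealed at time `t`. -/
noncomputable def Et (Φ : Formula n m k) (t : ℕ) : Finset (Fin m × Fin k) :=
  Finset.univ.filter (fun p => ∃ b, (p1 Φ t).pi p.1 p.2 = Sum.inl b)

/-- `ω = (1-ε) ln k`. -/
noncomputable def omOf (ε : ℝ) (k : ℕ) : ℝ := (1 - ε) * Real.log k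

/-- `m = ⌊(1-ε) 2^k k⁻¹ (ln k) n⌋`. -/
noncomputable def mOf (ε : ℝ) (k n : ℕ) : ℕ := ⌊(1 - ε) * 2 ^ k * Real.log k / k * n⌋₊

/-- `θ = ⌊4 n k⁻¹ ln ω⌋`. -/
noncomputable def thetaOf (ε : ℝ) (k n : ℕ) : ℕ := ⌊4 * (n : ℝ) / k * Real.log (omOf ε k)⌋₊

/-- The indicator random variable `B_t` of Corollary 9. -/
noncomputable def Bt (ε : ℝ) (n m k : ℕ) (t : ℕ) : Formula n m k → ℝ := fun Φ =>
  if t ≤ TT Φ ∧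
      (∃ i, (p1 Φ t).lastPhi = some i ∧
        ∀ j : Fin k, j.val + 1 < k1 k → 0 < Ux Φ (p1 Φ (t - 1)).Z ((Φ i j).1)) ∧
      ((n : ℝ) * (k : ℝ) ^ (ε / 2 - 1) ≤
        ((Finset.univ.filter (fun x : Fin n =>
          x ∉ (p1 Φ (t - 1)).Z ∧ Ux Φ (p1 Φ (t - 1)).Z x = 0)).card : ℝ)) ∧
      (((Uset Φ (p1 Φ t).Z).card : ℝ) ≤ (1 + ε / 3) * omOf ε k * n)
  then 1 else 0

/-- The indicator `H_{tij}`. -/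
noncomputable def Hind (n m k : ℕ) (t : ℕ) (i : Fin m) (j : Fin k) : Formula n m k → ℝ :=
  fun Φ =>
  if (p1 Φ (t - 1)).pi i j = Sum.inl true ∧
      ∃ z, (p1 Φ t).lastZ = some z ∧ (p1 Φ t).pi i j = Sum.inr (z, true)
  then 1 else 0

/-- The indicator `S_{tij}`. -/
noncomputable def Sind (n m k : ℕ) (t : ℕ) (i : Fin m) (j : Fin k) : Formula n m k → ℝ :=
  fun Φ => if t ≤ TT Φ ∧ ∃ b, (p1 Φ t).pi i j = Sum.inl b then 1 else 0


section Statement5Aux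

lemma aux_sign_count (k l : ℕ) :
    ((univ : Finset (Fin k → Bool)).filter
      (fun s => (univ.filter (fun j => s j = true)).card = l)).card ≤ k ^ l := by
  classical
  have key : ((univ : Finset (Fin k → Bool)).filter
      (fun s => (univ.filter (fun j => s j = true)).card = l)).card
      ≤ (Finset.powersetCard l (univ : Finset (Fin k))).card := by
    apply Finset.card_le_card_of_injOn (fun s => univ.filter (fun j => s j = true))
    · intro s hs
      simp only [mem_coe, mem_filter, mem_univ, true_and] at hs
      simp [Finset.mem_powersetCard, hs]
    · intro s hs t ht hst
      funext j
      have h2 := Finset.ext_iff.mp hst j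
      simp only [mem_filter, mem_univ, true_and] at h2
      cases hsj : s j <;> cases htj : t j <;> simp [hsj, htj] at h2 ⊢
  calc _ ≤ (Finset.powersetCard l (univ : Finset (Fin k))).card := key
    _ = Nat.choose k l := by simp
    _ ≤ k ^ l := Nat.choose_le_pow k l

lemma aux_var_count (n k : ℕ) (Z : Finset (Fin n)) :
    ((univ : Finset (Fin k → Fin n)).filter (fun v => ∃ j, v j ∈ Z)).card
      ≤ k * (Z.card * n ^ (k - 1)) := by
  classical
  have hex : ((univ : Finset (Fin k → Fin n)).filter (fun v => ∃ j, v j ∈ Z)).card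
      ≤ ∑ j : Fin k, ((univ : Finset (Fin k → Fin n)).filter (fun v => v j ∈ Z)).card := by
    calc ((univ : Finset (Fin k → Fin n)).filter (fun v => ∃ j, v j ∈ Z)).card
        = ∑ v ∈ (univ : Finset (Fin k → Fin n)).filter (fun v => ∃ j, v j ∈ Z), 1 := by simp
      _ ≤ ∑ v ∈ (univ : Finset (Fin k → Fin n)).filter (fun v => ∃ j, v j ∈ Z),
            ∑ j : Fin k, (if v j ∈ Z then 1 else 0) := by
          apply Finset.sum_le_sum
          intro v hv
          rw [Finset.mem_filter] at hv
          obtain ⟨j, hj⟩ := hv.2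
          calc 1 = (if v j ∈ Z then 1 else 0) := by rw [if_pos hj]
            _ ≤ ∑ j : Fin k, (if v j ∈ Z then 1 else 0) :=
              Finset.single_le_sum (f := fun j => if v j ∈ Z then 1 else 0)
                (fun _ _ => Nat.zero_le _) (mem_univ j)
      _ ≤ ∑ v : Fin k → Fin n, ∑ j : Fin k, (if v j ∈ Z then 1 else 0) :=
          Finset.sum_le_sum_of_subset (filter_subset _ _)
      _ = ∑ j : Fin k, ∑ v : Fin k → Fin n, (if v j ∈ Z then 1 else 0) := Finset.sum_comm
      _ = ∑ j : Fin k, ((univ : Finset (Fin k → Fin n)).filter (fun v => v j ∈ Z)).card := by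
          refine Finset.sum_congr rfl (fun j _ => ?_)
          rw [Finset.card_filter]
  have hcard : ∀ j : Fin k,
      ((univ : Finset (Fin k → Fin n)).filter (fun v => v j ∈ Z)).card
        = Z.card * n ^ (k - 1) := by
    intro j
    have hEq : ((univ : Finset (Fin k → Fin n)).filter (fun v => v j ∈ Z))
        = Fintype.piFinset (fun i => if i = j then Z else univ) := by
      ext v
      simp only [mem_filter, mem_univ, true_and, Fintype.mem_piFinset]
      constructor
      · intro hv i
        by_cases hij : i = j <;> simp [hij, hv]
      · intro hv
        have := hv j
        simpa using this
    rw [hEq, Fintype.card_piFinset]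
    rw [← Finset.mul_prod_erase univ _ (mem_univ j)]
    simp only [if_pos rfl]
    congr 1
    rw [Finset.prod_congr rfl (fun i hi => by
      rw [if_neg (Finset.ne_of_mem_erase hi)]), Finset.prod_const]
    simp [Finset.card_erase_of_mem, Finset.card_univ]
  calc ((univ : Finset (Fin k → Fin n)).filter (fun v => ∃ j, v j ∈ Z)).card
      ≤ ∑ j : Fin k, ((univ : Finset (Fin k → Fin n)).filter (fun v => v j ∈ Z)).card := hex
    _ = k * (Z.card * n ^ (k - 1)) := by
        rw [Finset.sum_congr rfl (fun j _ => hcard j), Finset.sum_const]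
        simp [Finset.card_univ]

lemma aux_clause_count (n k l : ℕ) (Z : Finset (Fin n)) :
    ((univ : Finset (Fin k → Fin n × Bool)).filter
      (fun c => (univ.filter (fun j => (c j).2 = true)).card = l ∧ ∃ j, (c j).1 ∈ Z)).card
      ≤ k ^ l * (k * (Z.card * n ^ (k - 1))) := by
  classical
  have key : ((univ : Finset (Fin k → Fin n × Bool)).filter
      (fun c => (univ.filter (fun j => (c j).2 = true)).card = l ∧ ∃ j, (c j).1 ∈ Z)).card
      ≤ (((univ : Finset (Fin k → Bool)).filter
            (fun s => (univ.filter (fun j => s j = true)).card = l)) ×ˢ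
          ((univ : Finset (Fin k → Fin n)).filter (fun v => ∃ j, v j ∈ Z))).card := by
    apply Finset.card_le_card_of_injOn
      (fun c => (fun j => (c j).2, fun j => (c j).1))
    · intro c hc
      simp only [mem_coe, mem_filter, mem_univ, true_and] at hc
      simp only [mem_coe, Finset.mem_product, mem_filter, mem_univ, true_and]
      exact hc
    · intro c _ d _ h
      funext j
      have h1 := congrArg (fun p => p.1 j) h
      have h2 := congrArg (fun p => p.2 j) h
      simp only at h1 h2
      exact Prod.ext h2 h1
  calc _ ≤ _ := key
    _ = _ * _ := Finset.card_product _ _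
    _ ≤ k ^ l * (k * (Z.card * n ^ (k - 1))) :=
        Nat.mul_le_mul (aux_sign_count k l) (aux_var_count n k Z)

lemma aux_markov {C : Type*} [Fintype C] [DecidableEq C] (m : ℕ) (B : Finset C) (t : ℝ)
    (X : (Fin m → C) → ℕ) (hX : ∀ Φ, X Φ = (univ.filter (fun i => Φ i ∈ B)).card)
    (S : Finset (Fin m → C)) (hS : ∀ Φ ∈ S, t < (X Φ : ℝ)) :
    (S.card : ℝ) * (2 : ℝ) ^ t ≤ ((Fintype.card C : ℝ) + B.card) ^ m := by
  classical
  have hnn : ∀ Φ : Fin m → C, (0:ℝ) ≤ (2:ℝ) ^ (X Φ) := fun Φ => by positivity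
  have hsum : ∑ Φ : Fin m → C, (2:ℝ) ^ (X Φ) = ((Fintype.card C : ℝ) + B.card) ^ m := by
    have h2 : ((Fintype.card C : ℝ) + B.card) = ∑ c : C, (if c ∈ B then (2:ℝ) else 1) := by
      have hc : ∀ c : C, (if c ∈ B then (2:ℝ) else 1) = 1 + (if c ∈ B then (1:ℝ) else 0) := by
        intro c; by_cases h : c ∈ B <;> simp [h]; norm_num
      rw [Finset.sum_congr rfl (fun c _ => hc c), Finset.sum_add_distrib, Finset.sum_const,
        Finset.sum_boole]
      simp [Finset.filter_univ_mem]
    rw [h2, Finset.sum_pow', Fintype.piFinset_univ]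
    refine Finset.sum_congr rfl (fun Φ _ => ?_)
    rw [hX Φ, Finset.prod_ite, Finset.prod_const, Finset.prod_const, one_pow, mul_one]
  calc (S.card : ℝ) * (2:ℝ) ^ t = ∑ _Φ ∈ S, (2:ℝ) ^ t := by
        rw [Finset.sum_const, nsmul_eq_mul]
    _ ≤ ∑ Φ ∈ S, (2:ℝ) ^ (X Φ) := Finset.sum_le_sum (fun Φ hΦ => by
        have h1 : (2:ℝ) ^ t ≤ (2:ℝ) ^ ((X Φ : ℕ) : ℝ) :=
          Real.rpow_le_rpow_of_exponent_le one_le_two (hS Φ hΦ).le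
        rwa [Real.rpow_natCast] at h1)
    _ ≤ ∑ Φ : Fin m → C, (2:ℝ) ^ (X Φ) :=
        Finset.sum_le_sum_of_subset_of_nonneg (subset_univ _) (fun Φ _ _ => hnn Φ)
    _ = _ := hsum

lemma aux_small_sets (n : ℕ) (δ : ℝ) (hδ0 : 0 < δ) (hδ1 : δ ≤ 1) (s : ℝ)
    (ZS : Finset (Finset (Fin n))) (hZS : ∀ Z ∈ ZS, (Z.card : ℝ) ≤ s) :
    (ZS.card : ℝ) * δ ^ s ≤ (1 + δ) ^ n := by
  classical
  have key : ∀ Z ∈ ZS, (δ : ℝ) ^ s ≤ δ ^ (Z.card : ℕ) := by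
    intro Z hZ
    have h := Real.rpow_le_rpow_of_exponent_ge hδ0 hδ1 (hZS Z hZ)
    rwa [Real.rpow_natCast] at h
  calc (ZS.card : ℝ) * δ ^ s = ∑ _Z ∈ ZS, (δ : ℝ) ^ s := by
        rw [Finset.sum_const, nsmul_eq_mul]
    _ ≤ ∑ Z ∈ ZS, (δ : ℝ) ^ (Z.card : ℕ) := Finset.sum_le_sum key
    _ ≤ ∑ Z : Finset (Fin n), (δ : ℝ) ^ (Z.card : ℕ) :=
        Finset.sum_le_sum_of_subset_of_nonneg (subset_univ _)
          (fun Z _ _ => by positivity)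
    _ = (1 + δ) ^ n := by
        have h := Finset.prod_add (fun _ : Fin n => δ) (fun _ : Fin n => (1:ℝ)) univ
        simp only [Finset.prod_const, Finset.card_univ, Fintype.card_fin, one_pow, mul_one,
          Finset.powerset_univ] at h
        rw [add_comm (1:ℝ) δ]
        exact h.symm

lemma aux_Pr_le_one (n m k : ℕ) (A : Set (Formula n m k)) : Pr n m k A ≤ 1 := by
  rw [Pr]
  apply div_le_one_of_le₀
  · exact_mod_cast Finset.card_filter_le _ _
  · positivity

lemma aux_Pr_lower (n m k : ℕ) (A : Set (Formula n m k)) (bad : Finset (Formula n m k))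
    (ε : ℝ) (hcov : ∀ Φ : Formula n m k, Φ ∉ A → Φ ∈ bad)
    (hb : (bad.card : ℝ) ≤ ε * (Fintype.card (Formula n m k) : ℝ))
    (hne : Nonempty (Formula n m k)) :
    1 - ε ≤ Pr n m k A := by
  classical
  have hT0 : (0:ℝ) < (((univ : Finset (Formula n m k)).card : ℕ) : ℝ) := by
    rw [Finset.card_univ]
    exact_mod_cast Fintype.card_pos
  rw [Pr, le_div_iff₀ hT0]
  have hcover : ((univ : Finset (Formula n m k)).card : ℕ)
      ≤ ((univ : Finset (Formula n m k)).filter (fun Φ => Φ ∈ A)).card + bad.card := by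
    calc ((univ : Finset (Formula n m k)).card : ℕ)
        ≤ (((univ : Finset (Formula n m k)).filter (fun Φ => Φ ∈ A)) ∪ bad).card := by
          apply Finset.card_le_card
          intro Φ _
          rw [Finset.mem_union, Finset.mem_filter]
          by_cases h : Φ ∈ A
          · exact Or.inl ⟨Finset.mem_univ _, h⟩
          · exact Or.inr (hcov Φ h)
      _ ≤ _ := Finset.card_union_le _ _
  have hcovR : (((univ : Finset (Formula n m k)).card : ℕ) : ℝ)
      ≤ ((((univ : Finset (Formula n m k)).filter (fun Φ => Φ ∈ A)).card : ℕ) : ℝ)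
        + ((bad.card : ℕ) : ℝ) := by
    exact_mod_cast hcover
  have hTC : (((univ : Finset (Formula n m k)).card : ℕ) : ℝ)
      = (Fintype.card (Formula n m k) : ℝ) := by
    rw [Finset.card_univ]
  rw [hTC] at hcovR ⊢
  nlinarith [hb, hcovR]

end Statement5Aux

set_option maxHeartbeats 3200000 in
/-- Lemma 6.  There is an absolute `α > 0` such that for all `k ≥ 3`
and densities `m/n ≤ 2^k k⁻¹ ln k`, for any `1 ≤ l ≤ √k` and `δ = α k^{-4l}`: whp every
set `Z` of at most `δn` variables satisfies `X_Z ≤ √δ · n`, where `X_Z` is the number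
of clauses with exactly `l` positive literals containing a variable of `Z`. -/
theorem statement5 :
    ∃ α : ℝ, 0 < α ∧ ∀ k : ℕ, 3 ≤ k → ∀ mf : ℕ → ℕ,
      (∀ n : ℕ, 0 < n → (mf n : ℝ) / n ≤ 2 ^ k * Real.log k / k) →
      ∀ l : ℕ, 1 ≤ l → (l : ℝ) ≤ Real.sqrt k →
      Tendsto (fun n : ℕ => Pr n (mf n) k {Φ : Formula n (mf n) k |
        ∀ Z : Finset (Fin n), (Z.card : ℝ) ≤ (α / (k : ℝ) ^ (4 * l)) * n →
          ((Finset.univ.filter (fun i : Fin (mf n) =>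
              posCount Φ i = l ∧ ∃ j, (Φ i j).1 ∈ Z)).card : ℝ)
            ≤ Real.sqrt (α / (k : ℝ) ^ (4 * l)) * n}) atTop (nhds 1) := by
  refine ⟨1/10000, by norm_num, ?_⟩
  intro k hk mf hmf l hl _hlk
  have hk3 : (3:ℝ) ≤ (k:ℝ) := by exact_mod_cast hk
  have hk1 : (1:ℝ) ≤ (k:ℝ) := by linarith
  have hk0 : (0:ℝ) < (k:ℝ) := by linarith
  set K : ℝ := (k:ℝ) ^ l with hK
  have hKk : (k:ℝ) ≤ K := by
    calc (k:ℝ) = (k:ℝ) ^ 1 := (pow_one _).symm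
      _ ≤ K := pow_le_pow_right₀ hk1 hl
  have hK3 : (3:ℝ) ≤ K := le_trans hk3 hKk
  have hK0 : (0:ℝ) < K := by linarith
  set q : ℝ := 1 / (100 * K ^ 2) with hq
  have hq0 : 0 < q := by rw [hq]; positivity
  have hq900 : q ≤ 1 / 900 := by
    rw [hq, div_le_div_iff₀ (by positivity) (by norm_num)]
    nlinarith
  have hq1 : q ≤ 1 := by linarith
  have hδeq : (1:ℝ)/10000 / (k:ℝ) ^ (4 * l) = q ^ 2 := by
    have h4 : (k:ℝ) ^ (4 * l) = K ^ 4 := by rw [hK, ← pow_mul, mul_comm]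
    rw [h4, hq]
    field_simp
    ring
  have hsqrt : Real.sqrt ((1:ℝ)/10000 / (k:ℝ) ^ (4 * l)) = q := by
    rw [hδeq, Real.sqrt_sq hq0.le]
  simp only [hsqrt]
  simp only [hδeq]
  -- the main counting estimate
  have hratio : ∀ n : ℕ, 1 ≤ n → ∀ m : ℕ, (m:ℝ) ≤ 2 ^ k * Real.log k / k * n →
      ((Finset.univ.filter (fun Φ : Formula n m k =>
          ∃ Z : Finset (Fin n), (Z.card : ℝ) ≤ q ^ 2 * n ∧
            q * n < ((Finset.univ.filter (fun i : Fin m =>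
              posCount Φ i = l ∧ ∃ j, (Φ i j).1 ∈ Z)).card : ℝ))).card : ℝ)
        ≤ Real.exp (-(q/2) * n) * (Fintype.card (Formula n m k) : ℝ) := by
    intro n hn1 m hmn
    classical
    have hn0 : (0:ℝ) < n := by exact_mod_cast hn1
    set N : ℝ := ((n:ℝ) * 2) ^ k with hN
    have hN0 : 0 < N := by rw [hN]; positivity
    set pb : ℝ := K * (k:ℝ) * q ^ 2 / 2 ^ k with hpb
    have hpb0 : 0 ≤ pb := by rw [hpb]; positivity
    set E2 : ℝ := Real.exp (Real.log 2 * (q * n)) with hE2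
    have hE20 : 0 < E2 := Real.exp_pos _
    set M : ℝ := (N * (1 + pb)) ^ m * E2⁻¹ with hM
    have hM0 : 0 ≤ M := by rw [hM]; positivity
    -- Step A : union bound over Z
    have hunion : ((Finset.univ.filter (fun Φ : Formula n m k =>
          ∃ Z : Finset (Fin n), (Z.card : ℝ) ≤ q ^ 2 * n ∧
            q * n < ((Finset.univ.filter (fun i : Fin m =>
              posCount Φ i = l ∧ ∃ j, (Φ i j).1 ∈ Z)).card : ℝ))).card : ℕ)
        ≤ ∑ Z : Finset (Fin n), ((Finset.univ.filter (fun Φ : Formula n m k =>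
            (Z.card : ℝ) ≤ q ^ 2 * n ∧
              q * n < ((Finset.univ.filter (fun i : Fin m =>
                posCount Φ i = l ∧ ∃ j, (Φ i j).1 ∈ Z)).card : ℝ))).card : ℕ) := by
      calc (Finset.univ.filter (fun Φ : Formula n m k =>
            ∃ Z : Finset (Fin n), (Z.card : ℝ) ≤ q ^ 2 * n ∧
              q * n < ((Finset.univ.filter (fun i : Fin m =>
                posCount Φ i = l ∧ ∃ j, (Φ i j).1 ∈ Z)).card : ℝ))).card
          = ∑ Φ ∈ Finset.univ.filter (fun Φ : Formula n m k =>
              ∃ Z : Finset (Fin n), (Z.card : ℝ) ≤ q ^ 2 * n ∧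
                q * n < ((Finset.univ.filter (fun i : Fin m =>
                  posCount Φ i = l ∧ ∃ j, (Φ i j).1 ∈ Z)).card : ℝ)), 1 := by simp
        _ ≤ ∑ Φ ∈ Finset.univ.filter (fun Φ : Formula n m k =>
              ∃ Z : Finset (Fin n), (Z.card : ℝ) ≤ q ^ 2 * n ∧
                q * n < ((Finset.univ.filter (fun i : Fin m =>
                  posCount Φ i = l ∧ ∃ j, (Φ i j).1 ∈ Z)).card : ℝ)),
              ∑ Z : Finset (Fin n), (if (Z.card : ℝ) ≤ q ^ 2 * n ∧
                q * n < ((Finset.univ.filter (fun i : Fin m =>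
                  posCount Φ i = l ∧ ∃ j, (Φ i j).1 ∈ Z)).card : ℝ) then 1 else 0) := by
            apply Finset.sum_le_sum
            intro Φ hΦ
            rw [Finset.mem_filter] at hΦ
            obtain ⟨Z, hZ⟩ := hΦ.2
            calc 1 = (if (Z.card : ℝ) ≤ q ^ 2 * n ∧
                q * n < ((Finset.univ.filter (fun i : Fin m =>
                  posCount Φ i = l ∧ ∃ j, (Φ i j).1 ∈ Z)).card : ℝ) then 1 else 0) := by
                  rw [if_pos hZ]
              _ ≤ _ := Finset.single_le_sum
                  (f := fun Z : Finset (Fin n) => if (Z.card : ℝ) ≤ q ^ 2 * n ∧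
                    q * n < ((Finset.univ.filter (fun i : Fin m =>
                      posCount Φ i = l ∧ ∃ j, (Φ i j).1 ∈ Z)).card : ℝ) then 1 else 0)
                  (fun _ _ => Nat.zero_le _) (Finset.mem_univ Z)
        _ ≤ ∑ Φ : Formula n m k,
              ∑ Z : Finset (Fin n), (if (Z.card : ℝ) ≤ q ^ 2 * n ∧
                q * n < ((Finset.univ.filter (fun i : Fin m =>
                  posCount Φ i = l ∧ ∃ j, (Φ i j).1 ∈ Z)).card : ℝ) then 1 else 0) :=
            Finset.sum_le_sum_of_subset (Finset.filter_subset _ _)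
        _ = ∑ Z : Finset (Fin n), ∑ Φ : Formula n m k,
              (if (Z.card : ℝ) ≤ q ^ 2 * n ∧
                q * n < ((Finset.univ.filter (fun i : Fin m =>
                  posCount Φ i = l ∧ ∃ j, (Φ i j).1 ∈ Z)).card : ℝ) then 1 else 0) :=
            Finset.sum_comm
        _ = ∑ Z : Finset (Fin n), ((Finset.univ.filter (fun Φ : Formula n m k =>
              (Z.card : ℝ) ≤ q ^ 2 * n ∧
                q * n < ((Finset.univ.filter (fun i : Fin m =>
                  posCount Φ i = l ∧ ∃ j, (Φ i j).1 ∈ Z)).card : ℝ))).card : ℕ) := by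
            refine Finset.sum_congr rfl (fun Z _ => ?_)
            rw [Finset.card_filter]
    -- Step B : per-Z Markov bound
    have hperZ : ∀ Z : Finset (Fin n),
        ((Finset.univ.filter (fun Φ : Formula n m k =>
            (Z.card : ℝ) ≤ q ^ 2 * n ∧
              q * n < ((Finset.univ.filter (fun i : Fin m =>
                posCount Φ i = l ∧ ∃ j, (Φ i j).1 ∈ Z)).card : ℝ))).card : ℝ)
          ≤ (if (Z.card : ℝ) ≤ q ^ 2 * n then M else 0) := by
      intro Z
      by_cases hZ : (Z.card : ℝ) ≤ q ^ 2 * n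
      · rw [if_pos hZ]
        have hmark := aux_markov (C := Fin k → Lit n) m
          (Finset.univ.filter (fun c : Fin k → Lit n =>
            (Finset.univ.filter (fun j => (c j).2 = true)).card = l ∧ ∃ j, (c j).1 ∈ Z))
          (q * n)
          (fun Φ : Formula n m k => (Finset.univ.filter (fun i : Fin m =>
            posCount Φ i = l ∧ ∃ j, (Φ i j).1 ∈ Z)).card)
          (by
            intro Φ
            refine congrArg Finset.card (Finset.filter_congr ?_)
            intro i _
            simp [posCount, Finset.mem_filter])
          (Finset.univ.filter (fun Φ : Formula n m k =>
            (Z.card : ℝ) ≤ q ^ 2 * n ∧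
              q * n < ((Finset.univ.filter (fun i : Fin m =>
                posCount Φ i = l ∧ ∃ j, (Φ i j).1 ∈ Z)).card : ℝ)))
          (fun Φ hΦ => (Finset.mem_filter.mp hΦ).2.2)
        have hcardC : (Fintype.card (Fin k → Lit n) : ℝ) = N := by
          have h1 : Fintype.card (Fin k → Lit n) = (n * 2) ^ k := by
            simp [Fintype.card_fun]
          rw [h1, hN]
          push_cast
          ring
        have hBbound : ((Finset.univ.filter (fun c : Fin k → Lit n =>
              (Finset.univ.filter (fun j => (c j).2 = true)).card = l ∧
                ∃ j, (c j).1 ∈ Z)).card : ℝ)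
            ≤ K * ((k:ℝ) * ((Z.card : ℝ) * (n:ℝ) ^ (k - 1))) := by
          have h1 := aux_clause_count n k l Z
          have h2 : (((k:ℕ) ^ l * ((k:ℕ) * (Z.card * n ^ (k - 1))) : ℕ) : ℝ)
              = K * ((k:ℝ) * ((Z.card : ℝ) * (n:ℝ) ^ (k - 1))) := by
            push_cast [hK]
            ring
          rw [← h2]
          exact_mod_cast h1
        have hnk : (n:ℝ) ^ (k - 1) * (n:ℝ) = (n:ℝ) ^ k := by
          have hk1n : k - 1 + 1 = k := Nat.sub_add_cancel (le_trans (by norm_num) hk)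
          rw [← pow_succ, hk1n]
        have hNpb : N * pb = K * ((k:ℝ) * ((q ^ 2 * (n:ℝ)) * (n:ℝ) ^ (k - 1))) := by
          have hr : K * ((k:ℝ) * ((q ^ 2 * (n:ℝ)) * (n:ℝ) ^ (k - 1)))
              = K * (k:ℝ) * q ^ 2 * (n:ℝ) ^ k := by
            linear_combination (K * (k:ℝ) * q ^ 2) * hnk
          rw [hN, hpb, mul_pow, hr]
          have h2k : (2:ℝ) ^ k ≠ 0 := by positivity
          field_simp
        have hCB : (Fintype.card (Fin k → Lit n) : ℝ) +
            ((Finset.univ.filter (fun c : Fin k → Lit n =>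
              (Finset.univ.filter (fun j => (c j).2 = true)).card = l ∧
                ∃ j, (c j).1 ∈ Z)).card : ℝ) ≤ N * (1 + pb) := by
          have hmono : K * ((k:ℝ) * ((Z.card : ℝ) * (n:ℝ) ^ (k - 1)))
              ≤ K * ((k:ℝ) * ((q ^ 2 * (n:ℝ)) * (n:ℝ) ^ (k - 1))) := by
            apply mul_le_mul_of_nonneg_left _ hK0.le
            apply mul_le_mul_of_nonneg_left _ hk0.le
            apply mul_le_mul_of_nonneg_right hZ (by positivity)
          have hle := le_trans hBbound hmono
          rw [← hNpb] at hle
          have hexpand : N * (1 + pb) = N + N * pb := by ring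
          linarith [hcardC, hle, hexpand]
        have h2qn : (2:ℝ) ^ (q * (n:ℝ)) = E2 := by
          rw [hE2, Real.rpow_def_of_pos two_pos]
        rw [h2qn] at hmark
        have hstep : ((Finset.univ.filter (fun Φ : Formula n m k =>
              (Z.card : ℝ) ≤ q ^ 2 * n ∧
                q * n < ((Finset.univ.filter (fun i : Fin m =>
                  posCount Φ i = l ∧ ∃ j, (Φ i j).1 ∈ Z)).card : ℝ))).card : ℝ) * E2
            ≤ (N * (1 + pb)) ^ m := by
          refine le_trans hmark ?_
          exact pow_le_pow_left₀ (add_nonneg (Nat.cast_nonneg _) (Nat.cast_nonneg _)) hCB m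
        rw [hM, ← div_eq_mul_inv]
        rw [← le_div_iff₀ hE20] at hstep
        exact hstep
      · rw [if_neg hZ]
        have hempty : (Finset.univ.filter (fun Φ : Formula n m k =>
            (Z.card : ℝ) ≤ q ^ 2 * n ∧
              q * n < ((Finset.univ.filter (fun i : Fin m =>
                posCount Φ i = l ∧ ∃ j, (Φ i j).1 ∈ Z)).card : ℝ))).card = 0 := by
          rw [Finset.card_eq_zero, Finset.filter_eq_empty_iff]
          exact fun Φ _ hcontra => hZ hcontra.1
        rw [hempty]
        norm_num
    -- Step C : sum the per-Z bounds
    have hZSsum : ∑ Z : Finset (Fin n), (if (Z.card : ℝ) ≤ q ^ 2 * n then M else 0)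
        = ((Finset.univ.filter (fun Z : Finset (Fin n) =>
            (Z.card : ℝ) ≤ q ^ 2 * n)).card : ℝ) * M := by
      rw [← Finset.sum_filter, Finset.sum_const, nsmul_eq_mul]
    -- Step D : number of small sets
    have hq20 : (0:ℝ) < q ^ 2 := by positivity
    have hq21 : q ^ 2 ≤ 1 := by nlinarith
    have hZS := aux_small_sets n (q ^ 2) hq20 hq21 (q ^ 2 * n)
      (Finset.univ.filter (fun Z : Finset (Fin n) => (Z.card : ℝ) ≤ q ^ 2 * n))
      (fun Z hZ => (Finset.mem_filter.mp hZ).2)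
    set E1 : ℝ := Real.exp (Real.log (q ^ 2) * (q ^ 2 * n)) with hE1
    have hE10 : 0 < E1 := Real.exp_pos _
    have hq2rpow : (q ^ 2 : ℝ) ^ ((q ^ 2 * (n:ℝ))) = E1 := by
      rw [hE1, Real.rpow_def_of_pos hq20]
    rw [hq2rpow] at hZS
    have hZScard : ((Finset.univ.filter (fun Z : Finset (Fin n) =>
        (Z.card : ℝ) ≤ q ^ 2 * n)).card : ℝ) ≤ (1 + q ^ 2) ^ n * E1⁻¹ := by
      rw [← le_div_iff₀ hE10] at hZS
      rw [div_eq_mul_inv] at hZS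
      exact hZS
    -- Step E : put everything together
    have hchain : ((Finset.univ.filter (fun Φ : Formula n m k =>
          ∃ Z : Finset (Fin n), (Z.card : ℝ) ≤ q ^ 2 * n ∧
            q * n < ((Finset.univ.filter (fun i : Fin m =>
              posCount Φ i = l ∧ ∃ j, (Φ i j).1 ∈ Z)).card : ℝ))).card : ℝ)
        ≤ ((1 + q ^ 2) ^ n * E1⁻¹) * M := by
      have hcast : ((Finset.univ.filter (fun Φ : Formula n m k =>
            ∃ Z : Finset (Fin n), (Z.card : ℝ) ≤ q ^ 2 * n ∧
              q * n < ((Finset.univ.filter (fun i : Fin m =>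
                posCount Φ i = l ∧ ∃ j, (Φ i j).1 ∈ Z)).card : ℝ))).card : ℝ)
          ≤ ∑ Z : Finset (Fin n), ((Finset.univ.filter (fun Φ : Formula n m k =>
              (Z.card : ℝ) ≤ q ^ 2 * n ∧
                q * n < ((Finset.univ.filter (fun i : Fin m =>
                  posCount Φ i = l ∧ ∃ j, (Φ i j).1 ∈ Z)).card : ℝ))).card : ℝ) := by
        exact_mod_cast hunion
      calc ((Finset.univ.filter (fun Φ : Formula n m k =>
            ∃ Z : Finset (Fin n), (Z.card : ℝ) ≤ q ^ 2 * n ∧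
              q * n < ((Finset.univ.filter (fun i : Fin m =>
                posCount Φ i = l ∧ ∃ j, (Φ i j).1 ∈ Z)).card : ℝ))).card : ℝ)
          ≤ ∑ Z : Finset (Fin n), ((Finset.univ.filter (fun Φ : Formula n m k =>
              (Z.card : ℝ) ≤ q ^ 2 * n ∧
                q * n < ((Finset.univ.filter (fun i : Fin m =>
                  posCount Φ i = l ∧ ∃ j, (Φ i j).1 ∈ Z)).card : ℝ))).card : ℝ) := hcast
        _ ≤ ∑ Z : Finset (Fin n), (if (Z.card : ℝ) ≤ q ^ 2 * n then M else 0) :=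
            Finset.sum_le_sum (fun Z _ => hperZ Z)
        _ = ((Finset.univ.filter (fun Z : Finset (Fin n) =>
              (Z.card : ℝ) ≤ q ^ 2 * n)).card : ℝ) * M := hZSsum
        _ ≤ ((1 + q ^ 2) ^ n * E1⁻¹) * M :=
            mul_le_mul_of_nonneg_right hZScard hM0
    -- exponential bounds
    have hexp1 : ((1 + q ^ 2 : ℝ)) ^ n ≤ Real.exp (q ^ 2 * n) := by
      calc ((1 + q ^ 2 : ℝ)) ^ n ≤ (Real.exp (q ^ 2)) ^ n := by
            apply pow_le_pow_left₀ (by positivity)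
            linarith [Real.add_one_le_exp (q ^ 2)]
        _ = Real.exp (q ^ 2 * n) := by rw [← Real.exp_nat_mul, mul_comm]
    have hexp2 : (N * (1 + pb)) ^ m ≤ N ^ m * Real.exp (pb * m) := by
      rw [mul_pow]
      apply mul_le_mul_of_nonneg_left _ (by positivity)
      calc (1 + pb) ^ m ≤ (Real.exp pb) ^ m := by
            apply pow_le_pow_left₀ (by positivity)
            linarith [Real.add_one_le_exp pb]
        _ = Real.exp (pb * m) := by rw [← Real.exp_nat_mul, mul_comm]
    have hbound2 : ((1 + q ^ 2) ^ n * E1⁻¹) * M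
        ≤ N ^ m * Real.exp (q ^ 2 * n - Real.log (q ^ 2) * (q ^ 2 * n)
            + pb * m - Real.log 2 * (q * n)) := by
      have step1 : ((1 + q ^ 2) ^ n * E1⁻¹) * M
          ≤ (Real.exp (q ^ 2 * n) * E1⁻¹) * ((N ^ m * Real.exp (pb * m)) * E2⁻¹) := by
        rw [hM]
        apply mul_le_mul
        · exact mul_le_mul_of_nonneg_right hexp1 (by positivity)
        · exact mul_le_mul_of_nonneg_right hexp2 (by positivity)
        · positivity
        · positivity
      refine le_trans step1 (le_of_eq ?_)
      rw [hE1, hE2, ← Real.exp_neg, ← Real.exp_neg]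
      rw [show Real.exp (q ^ 2 * n) * Real.exp (-(Real.log (q ^ 2) * (q ^ 2 * n))) *
            (N ^ m * Real.exp (pb * m) * Real.exp (-(Real.log 2 * (q * n))))
          = N ^ m * (Real.exp (q ^ 2 * n) * Real.exp (-(Real.log (q ^ 2) * (q ^ 2 * n))) *
              Real.exp (pb * m) * Real.exp (-(Real.log 2 * (q * n)))) from by ring]
      rw [← Real.exp_add, ← Real.exp_add, ← Real.exp_add]
      ring_nf
    -- the arithmetic estimate for the exponent
    have harith : q ^ 2 * n - Real.log (q ^ 2) * (q ^ 2 * n) + pb * m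
        - Real.log 2 * (q * n) ≤ -(q/2) * n := by
      have hP0 : (0:ℝ) ≤ q * n := by positivity
      have hlogq : -Real.log (q ^ 2) ≤ 40 * K := by
        have hinv : q ^ 2 = ((10 * K) ^ 4)⁻¹ := by
          rw [hq]
          field_simp
          ring
        rw [hinv, Real.log_inv, neg_neg]
        have hlp : Real.log ((10 * K) ^ 4) = 4 * Real.log (10 * K) := by
          rw [Real.log_pow]
          norm_num
        rw [hlp]
        have h10K : Real.log (10 * K) ≤ 10 * K - 1 :=
          Real.log_le_sub_one_of_pos (by positivity)
        linarith
      have hlogq0 : 0 ≤ -Real.log (q ^ 2) := by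
        have := Real.log_nonpos (by positivity) hq21
        linarith
      have hlog2 : (0.6931471803 : ℝ) ≤ Real.log 2 := Real.log_two_gt_d9.le
      have hlogk : Real.log k ≤ K := by
        have := Real.log_le_sub_one_of_pos hk0
        linarith
      have hlogk0 : 0 ≤ Real.log k := Real.log_nonneg hk1
      -- term 1
      have hterm1 : q ^ 2 * n ≤ (1/900) * (q * n) := by nlinarith
      -- term 2
      have h40 : 40 * K * q ≤ 2/15 := by
        rw [hq, mul_one_div, div_le_div_iff₀ (by positivity) (by norm_num)]
        nlinarith
      have hterm2 : -Real.log (q ^ 2) * (q ^ 2 * n) ≤ (2/15) * (q * n) := by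
        have h1 : -Real.log (q ^ 2) * (q ^ 2 * n) ≤ 40 * K * (q ^ 2 * n) :=
          mul_le_mul_of_nonneg_right hlogq (by positivity)
        have h2 : 40 * K * (q ^ 2 * n) = (40 * K * q) * (q * n) := by ring
        have h3 : (40 * K * q) * (q * n) ≤ (2/15) * (q * n) :=
          mul_le_mul_of_nonneg_right h40 hP0
        linarith
      -- term 3
      have hKq : K ^ 2 * q ^ 2 * (n:ℝ) = (1/100) * (q * n) := by
        rw [hq]
        field_simp
      have hterm3 : pb * m ≤ (1/100) * (q * n) := by
        have h1 : pb * m ≤ pb * (2 ^ k * Real.log k / k * n) :=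
          mul_le_mul_of_nonneg_left hmn hpb0
        have h2 : pb * (2 ^ k * Real.log k / k * n) = K * Real.log k * q ^ 2 * n := by
          rw [hpb]
          have h2k : (2:ℝ) ^ k ≠ 0 := by positivity
          field_simp
        have h3 : K * Real.log k * q ^ 2 * n ≤ K * K * q ^ 2 * n := by
          apply mul_le_mul_of_nonneg_right _ hn0.le
          apply mul_le_mul_of_nonneg_right _ (by positivity)
          exact mul_le_mul_of_nonneg_left hlogk hK0.le
        have h4 : K * K * q ^ 2 * (n:ℝ) = (1/100) * (q * n) := by
          rw [← hKq]; ring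
        linarith
      -- term 4
      have hterm4 : (0.6931471803 : ℝ) * (q * n) ≤ Real.log 2 * (q * n) :=
        mul_le_mul_of_nonneg_right hlog2 hP0
      have hfin : -(q/2) * (n:ℝ) = -(1/2) * (q * n) := by ring
      rw [hfin]
      linarith
    -- total count
    have hFC : (Fintype.card (Formula n m k) : ℝ) = N ^ m := by
      have h1 : Fintype.card (Formula n m k) = ((n * 2) ^ k) ^ m := by
        simp [Fintype.card_fun]
      rw [h1, hN]
      push_cast
      ring
    rw [hFC]
    calc ((Finset.univ.filter (fun Φ : Formula n m k =>
          ∃ Z : Finset (Fin n), (Z.card : ℝ) ≤ q ^ 2 * n ∧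
            q * n < ((Finset.univ.filter (fun i : Fin m =>
              posCount Φ i = l ∧ ∃ j, (Φ i j).1 ∈ Z)).card : ℝ))).card : ℝ)
        ≤ ((1 + q ^ 2) ^ n * E1⁻¹) * M := hchain
      _ ≤ N ^ m * Real.exp (q ^ 2 * n - Real.log (q ^ 2) * (q ^ 2 * n)
            + pb * m - Real.log 2 * (q * n)) := hbound2
      _ ≤ N ^ m * Real.exp (-(q/2) * n) := by
          apply mul_le_mul_of_nonneg_left _ (by positivity)
          exact Real.exp_le_exp.mpr harith
      _ = Real.exp (-(q/2) * n) * N ^ m := by ring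
  -- the squeeze
  have hglim : Tendsto (fun n : ℕ => 1 - Real.exp (-(q/2)) ^ n) atTop (nhds 1) := by
    have h1 : Tendsto (fun n : ℕ => Real.exp (-(q/2)) ^ n) atTop (nhds 0) := by
      apply tendsto_pow_atTop_nhds_zero_of_lt_one (Real.exp_pos _).le
      exact Real.exp_lt_one_iff.mpr (by linarith)
    simpa using tendsto_const_nhds.sub h1
  refine tendsto_of_tendsto_of_tendsto_of_le_of_le' hglim tendsto_const_nhds ?_ ?_
  · -- lower bound, eventually
    filter_upwards [eventually_ge_atTop 1] with n hn1
    have hn0 : (0:ℝ) < n := by exact_mod_cast hn1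
    have hmn : ((mf n : ℕ) : ℝ) ≤ 2 ^ k * Real.log k / k * n := by
      have h := hmf n hn1
      rw [div_le_iff₀ hn0] at h
      exact h
    have hbad := hratio n hn1 (mf n) hmn
    have hconv : Real.exp (-(q/2)) ^ n = Real.exp (-(q/2) * n) := by
      rw [← Real.exp_nat_mul, mul_comm]
    set A : Set (Formula n (mf n) k) := {Φ : Formula n (mf n) k |
      ∀ Z : Finset (Fin n), (Z.card : ℝ) ≤ q ^ 2 * n →
        ((Finset.univ.filter (fun i : Fin (mf n) =>
          posCount Φ i = l ∧ ∃ j, (Φ i j).1 ∈ Z)).card : ℝ) ≤ q * n} with hA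
    show 1 - Real.exp (-(q/2)) ^ n ≤ Pr n (mf n) k A
    have hne : Nonempty (Formula n (mf n) k) := ⟨fun _ _ => (⟨0, hn1⟩, true)⟩
    rw [hconv]
    refine aux_Pr_lower n (mf n) k A _ (Real.exp (-(q/2) * n)) ?_ hbad hne
    intro Φ hΦ
    rw [Finset.mem_filter]
    refine ⟨Finset.mem_univ _, ?_⟩
    rw [hA] at hΦ
    simp only [Set.mem_setOf_eq] at hΦ
    push_neg at hΦ
    exact hΦ
  · -- upper bound 1
    exact Eventually.of_forall (fun n => aux_Pr_le_one n (mf n) k _)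


end RandomKSAT
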